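/- Splitting a closed combinatorial curve at a twice-visited vertex: let C be a cyclic sequence of distinct directed arcs forming a closed curve that passes through a tile T exactly twice, using its two arcs a₁ and a₂. Replacing a₁ and a₂ by the two arcs a₁', a₂' of the switched tile (which reconnect the four endpoints the other way) splits C into exactly two disjoint closed curves, one containing the arcs of C strictly between a₁ and a₂, the other containing the remaining arcs. -/
import Mathlib


private lemma pow_mod_apply {A : Type*} (τ : Equiv.Perm A) (a : A) {p : ℕ}
    (ha : (τ ^ p) a = a) (i : ℕ) : (τ ^ i) a = (τ ^ (i % p)) a := by
  have key : ∀ q : ℕ, ((τ ^ p) ^ q) a = a := by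
    intro q
    induction q with
    | zero => simp
    | succ q ih => rw [pow_succ, Equiv.Perm.mul_apply, ha, ih]
  conv_lhs => rw [← Nat.mod_add_div i p]
  rw [pow_add, Equiv.Perm.mul_apply, pow_mul, key]

/-- Splitting a closed combinatorial curve at a twice-visited tile.  A single closed
curve through all arcs is a cyclic permutation `π` of the (finite) set of arcs with
full support.  Switching the twice-visited tile re-pairs the four endpoints, which
amounts to replacing `π` by `π' = π * swap a₁ a₂` where `a₁, a₂` are the tile's two
arcs.  Then the curve splits into exactly two disjoint closed curves: `a₁` and `a₂`
lie on different cycles of `π'`, every arc lies on one of these two cycles, and the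
cycle of `a₂` consists of `a₂` together with precisely the arcs of the original curve
strictly between `a₁` and `a₂`. -/
theorem stmt_17 {A : Type*} [Fintype A] [DecidableEq A]
    (π : Equiv.Perm A) (hπ : π.IsCycle) (hsupp : π.support = Finset.univ)
    (a₁ a₂ : A) (hne : a₁ ≠ a₂) :
    ¬ (π * Equiv.swap a₁ a₂).SameCycle a₁ a₂ ∧
    (∀ x : A, (π * Equiv.swap a₁ a₂).SameCycle a₁ x ∨
      (π * Equiv.swap a₁ a₂).SameCycle a₂ x) ∧
    (∀ x : A, (π * Equiv.swap a₁ a₂).SameCycle a₂ x ↔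
      (x = a₂ ∨ ∃ k : ℕ, 0 < k ∧ (π ^ k) a₁ = x ∧
        ∀ m : ℕ, 0 < m → m ≤ k → (π ^ m) a₁ ≠ a₂)) := by
  classical
  set σ := π * Equiv.swap a₁ a₂ with hσdef
  have hmov : ∀ x : A, π x ≠ x := by
    intro x
    have : x ∈ π.support := by rw [hsupp]; exact Finset.mem_univ x
    exact Equiv.Perm.mem_support.mp this
  set n := orderOf π with hn
  have hpowa₁ : ∀ j : ℕ, (π ^ j) a₁ = a₁ → n ∣ j := by
    intro j hj
    exact orderOf_dvd_of_pow_eq_one ((hπ.pow_eq_one_iff' (hmov a₁)).mpr hj)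
  have hπn : (π ^ n) a₁ = a₁ := by rw [pow_orderOf_eq_one]; rfl
  -- σ computations
  have hσa₂ : σ a₂ = π a₁ := by
    rw [hσdef, Equiv.Perm.mul_apply, Equiv.swap_apply_right]
  have hσa₁ : σ a₁ = π a₂ := by
    rw [hσdef, Equiv.Perm.mul_apply, Equiv.swap_apply_left]
  have hσx : ∀ x : A, x ≠ a₁ → x ≠ a₂ → σ x = π x := by
    intro x h1 h2
    rw [hσdef, Equiv.Perm.mul_apply, Equiv.swap_apply_of_ne_of_ne h1 h2]
  -- K : first positive return to a₂
  have hex : ∃ k : ℕ, 0 < k ∧ (π ^ k) a₁ = a₂ := by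
    obtain ⟨i, hi⟩ := hπ.exists_pow_eq (hmov a₁) (hmov a₂)
    rcases Nat.eq_zero_or_pos i with rfl | hi0
    · exact absurd (by simpa using hi) hne
    · exact ⟨i, hi0, hi⟩
  set K := Nat.find hex with hKdef
  obtain ⟨hKpos, hKa₂⟩ : 0 < K ∧ (π ^ K) a₁ = a₂ := Nat.find_spec hex
  have hmin : ∀ m : ℕ, 0 < m → m < K → (π ^ m) a₁ ≠ a₂ := by
    intro m hm hmK hc
    exact Nat.find_min hex hmK ⟨hm, hc⟩
  have hKn : K < n := by
    by_contra h
    push_neg at h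
    have hnpos : 0 < n := orderOf_pos π
    have hKne : K ≠ n := by
      intro hKN
      rw [hKN, hπn] at hKa₂
      exact hne hKa₂
    have hlt : n < K := lt_of_le_of_ne h (Ne.symm hKne)
    have : (π ^ (K - n)) a₁ = a₂ := by
      have h2 : (π ^ (K - n)) ((π ^ n) a₁) = a₂ := by
        rw [← Equiv.Perm.mul_apply, ← pow_add, Nat.sub_add_cancel h, hKa₂]
      rwa [hπn] at h2
    exact hmin (K - n) (by omega) (by omega) this
  have hπa₁ne : ∀ m : ℕ, 0 < m → m < n → (π ^ m) a₁ ≠ a₁ := by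
    intro m hm hmn hc
    have := Nat.le_of_dvd hm (hpowa₁ m hc)
    omega
  have hπa₂ne : ∀ m : ℕ, m < n → m ≠ K → (π ^ m) a₁ ≠ a₂ := by
    intro m hmn hmK hc
    rcases lt_or_gt_of_ne hmK with h | h
    · rcases Nat.eq_zero_or_pos m with rfl | hm0
      · have h12 : a₁ = a₂ := by simpa using hc
        exact hne h12
      · exact hmin m hm0 h hc
    · -- K < m : π^m a₁ = π^K a₁ ⇒ π^(m-K) a₁ = a₁ ⇒ n ∣ m - K
      have h2 : (π ^ K) ((π ^ (m - K)) a₁) = (π ^ K) a₁ := by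
        rw [← Equiv.Perm.mul_apply, ← pow_add, Nat.add_sub_cancel' (le_of_lt h), hc, hKa₂]
      have h3 : (π ^ (m - K)) a₁ = a₁ := (π ^ K).injective h2
      have := Nat.le_of_dvd (by omega) (hpowa₁ _ h3)
      omega
  -- L1 : the σ-orbit of a₂ follows π from a₁
  have L1 : ∀ m : ℕ, 1 ≤ m → m ≤ K → (σ ^ m) a₂ = (π ^ m) a₁ := by
    intro m hm1 hmK
    induction m with
    | zero => omega
    | succ m ih =>
      rcases Nat.eq_zero_or_pos m with rfl | hm0
      · simpa using hσa₂
      · have hmK' : m < K := by omega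
        have hprev := ih hm0 (le_of_lt hmK')
        have hne1 : (π ^ m) a₁ ≠ a₁ := hπa₁ne m hm0 (by omega)
        have hne2 : (π ^ m) a₁ ≠ a₂ := hmin m hm0 hmK'
        calc (σ ^ (m + 1)) a₂ = σ ((σ ^ m) a₂) := by
              rw [pow_succ', Equiv.Perm.mul_apply]
          _ = σ ((π ^ m) a₁) := by rw [hprev]
          _ = π ((π ^ m) a₁) := hσx _ hne1 hne2
          _ = (π ^ (m + 1)) a₁ := by rw [pow_succ', Equiv.Perm.mul_apply]
  have hσK : (σ ^ K) a₂ = a₂ := by rw [L1 K hKpos le_rfl, hKa₂]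
  -- L2 : the σ-orbit of a₁ follows π from a₂
  have L2 : ∀ m : ℕ, 1 ≤ m → m ≤ n - K → (σ ^ m) a₁ = (π ^ (K + m)) a₁ := by
    intro m hm1 hmnK
    induction m with
    | zero => omega
    | succ m ih =>
      rcases Nat.eq_zero_or_pos m with rfl | hm0
      · simp only [zero_add, pow_one]
        rw [hσa₁, ← hKa₂, ← Equiv.Perm.mul_apply, ← pow_succ']
      · have hmnK' : m < n - K := by omega
        have hprev := ih hm0 (le_of_lt hmnK')
        have hne1 : (π ^ (K + m)) a₁ ≠ a₁ := hπa₁ne (K + m) (by omega) (by omega)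
        have hne2 : (π ^ (K + m)) a₁ ≠ a₂ := hπa₂ne (K + m) (by omega) (by omega)
        calc (σ ^ (m + 1)) a₁ = σ ((σ ^ m) a₁) := by
              rw [pow_succ', Equiv.Perm.mul_apply]
          _ = σ ((π ^ (K + m)) a₁) := by rw [hprev]
          _ = π ((π ^ (K + m)) a₁) := hσx _ hne1 hne2
          _ = (π ^ (K + (m + 1))) a₁ := by
              rw [← Equiv.Perm.mul_apply, ← pow_succ', Nat.add_assoc]
  have hσnK : (σ ^ (n - K)) a₁ = a₁ := by
    rw [L2 (n - K) (by omega) le_rfl, Nat.add_sub_cancel' (le_of_lt hKn), hπn]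
  -- characterize the σ-orbit of a₂
  have orb₂ : ∀ x : A, σ.SameCycle a₂ x ↔ ∃ m : ℕ, m < K ∧ (σ ^ m) a₂ = x := by
    intro x
    constructor
    · intro h
      obtain ⟨i, _, hi⟩ := h.exists_pow_eq'
      exact ⟨i % K, Nat.mod_lt _ hKpos, by rw [← pow_mod_apply σ a₂ hσK i, hi]⟩
    · rintro ⟨m, _, hm⟩
      exact ⟨(m : ℤ), by simpa using hm⟩
  -- part 1 : a₁ and a₂ are on different σ-cycles
  refine ⟨?_, ?_, ?_⟩
  · intro h
    obtain ⟨i, _, hi⟩ := h.exists_pow_eq'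
    have h2 : (σ ^ (i % (n - K))) a₁ = a₂ := by
      rw [← pow_mod_apply σ a₁ hσnK i, hi]
    set m := i % (n - K) with hm
    have hmlt : m < n - K := Nat.mod_lt _ (by omega)
    rcases Nat.eq_zero_or_pos m with h0 | hm0
    · rw [h0] at h2; exact hne (by simpa using h2)
    · rw [L2 m hm0 (le_of_lt hmlt)] at h2
      exact hπa₂ne (K + m) (by omega) (by omega) h2
  -- part 2 : every point is on one of the two cycles
  · intro x
    rcases eq_or_ne x a₁ with rfl | hx1
    · exact Or.inl (Equiv.Perm.SameCycle.refl _ _)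
    obtain ⟨j, hjn, hj⟩ :=
      (hπ.sameCycle (hmov a₁) (hmov x)).exists_pow_eq'
    rcases Nat.eq_zero_or_pos j with rfl | hj0
    · have hxa : x = a₁ := by simpa using hj.symm
      exact absurd hxa hx1
    rcases le_or_gt j K with hjK | hKj
    · exact Or.inr ⟨(j : ℤ), by simpa [L1 j hj0 hjK] using hj⟩
    · refine Or.inl ⟨((j - K : ℕ) : ℤ), ?_⟩
      have := L2 (j - K) (by omega) (by omega)
      rw [Nat.add_sub_cancel' (le_of_lt hKj)] at this
      simpa [this] using hj
  -- part 3 : description of the cycle of a₂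
  · intro x
    constructor
    · intro h
      obtain ⟨m, hmK, hm⟩ := (orb₂ x).mp h
      rcases Nat.eq_zero_or_pos m with rfl | hm0
      · exact Or.inl (by simpa using hm.symm)
      · refine Or.inr ⟨m, hm0, by rw [← L1 m hm0 (le_of_lt hmK), hm], ?_⟩
        intro m' hm'0 hm'm
        exact hmin m' hm'0 (lt_of_le_of_lt hm'm hmK)
    · rintro (rfl | ⟨k, hk0, hkx, hG⟩)
      · exact Equiv.Perm.SameCycle.refl _ _
      · have hkK : k < K := by
          by_contra h
          push_neg at h
          exact hG K hKpos h hKa₂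
        exact (orb₂ x).mpr ⟨k, hkK, by rw [L1 k hk0 (le_of_lt hkK), hkx]⟩
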